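/- Let q be an odd prime power, d a non-square in F_q*, and α in F_{q^2} with α² = d. If q ≡ 1 (mod 4), then the set {1} ∪ {c*α : c in F_q and c*α − 1 is not a square in F_{q^2}} is a maximal independent set of size (q+1)/2 in the Paley graph P(q²). If q ≡ 3 (mod 4), then the set {1, −1} ∪ {c*α : c in F_q and c*α − 1 is a square in F_{q^2}} is a maximal clique of size (q+3)/2 in P(q²). -/

import Mathlib

/-- A clique in the Paley graph P(q^2): any two distinct elements differ by a square. -/
def paleyClique {F : Type*} [Field F] (C : Set F) : Prop :=
  ∀ x ∈ C, ∀ y ∈ C, x ≠ y → IsSquare (x - y)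

/-- An independent set in the Paley graph P(q^2). -/
def paleyIndep {F : Type*} [Field F] (C : Set F) : Prop :=
  ∀ x ∈ C, ∀ y ∈ C, x ≠ y → ¬ IsSquare (x - y)

/-- A maximal clique in the Paley graph P(q^2). -/
def maxPaleyClique {F : Type*} [Field F] (C : Set F) : Prop :=
  paleyClique C ∧ ∀ C' : Set F, paleyClique C' → C ⊆ C' → C' = C

/-- A maximal independent set in the Paley graph P(q^2). -/
def maxPaleyIndep {F : Type*} [Field F] (C : Set F) : Prop :=
  paleyIndep C ∧ ∀ C' : Set F, paleyIndep C' → C ⊆ C' → C' = C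


open Finset

set_option linter.unusedSectionVars false

section Aux2
variable {E : Type*} [Field E] [Fintype E] [DecidableEq E]

private lemma count_neg_one {γ : Type*} [DecidableEq γ] (s : Finset γ) (g : γ → ℤ)
    (h : ∀ x ∈ s, g x = 1 ∨ g x = -1) :
    (2 * #(s.filter fun x => g x = -1) : ℤ) = #s - ∑ x ∈ s, g x ∧
    (2 * #(s.filter fun x => g x = 1) : ℤ) = #s + ∑ x ∈ s, g x := by
  have hM : s.filter (fun x => g x = -1) = s.filter (fun x => ¬ (g x = 1)) := by
    refine Finset.filter_congr fun x hx => ?_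
    rcases h x hx with h1 | h1 <;> simp [h1]
  have hsum : ∑ x ∈ s, g x
      = ∑ x ∈ s.filter (fun x => g x = 1), g x + ∑ x ∈ s.filter (fun x => ¬ (g x = 1)), g x :=
    (Finset.sum_filter_add_sum_filter_not s _ g).symm
  have hP : ∑ x ∈ s.filter (fun x => g x = 1), g x = #(s.filter fun x => g x = 1) := by
    rw [Finset.sum_congr rfl (fun x hx => (mem_filter.mp hx).2), Finset.sum_const]
    simp
  have hMs : ∑ x ∈ s.filter (fun x => ¬ (g x = 1)), g x
      = -#(s.filter fun x => g x = -1) := by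
    rw [← hM, Finset.sum_congr rfl (fun x hx => (mem_filter.mp hx).2), Finset.sum_const]
    simp
  have hcard : #(s.filter fun x => g x = 1) + #(s.filter fun x => ¬ (g x = 1)) = #s :=
    Finset.card_filter_add_card_filter_not _
  rw [← hM] at hcard
  constructor <;> [skip; skip] <;>
  · rw [hsum, hP, hMs]
    have := hcard
    push_cast [← this]
    ring

private lemma quad_fiber_le_two (u v w : E) (h : ¬ (u = 0 ∧ v = 0 ∧ w = 0)) :
    #(univ.filter fun c : E => u * c ^ 2 + v * c + w = 0) ≤ 2 := by
  by_contra hlt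
  push_neg at hlt
  obtain ⟨x, hx, y, hy, z, hz, hxy, hxz, hyz⟩ := Finset.two_lt_card.mp hlt
  simp only [mem_filter, mem_univ, true_and] at hx hy hz
  by_cases hu : u = 0
  · subst hu
    by_cases hv : v = 0
    · subst hv
      exact h ⟨rfl, rfl, by linear_combination hx⟩
    · have : v * (x - y) = 0 := by linear_combination hx - hy
      rcases mul_eq_zero.mp this with h' | h'
      · exact hv h'
      · exact hxy (sub_eq_zero.mp h')
  · have key : ∀ a b : E, a ≠ b → u * a ^ 2 + v * a + w = 0 → u * b ^ 2 + v * b + w = 0 →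
        u * (a + b) + v = 0 := by
      intro a b hab ha hb
      have : (a - b) * (u * (a + b) + v) = 0 := by linear_combination ha - hb
      rcases mul_eq_zero.mp this with h' | h'
      · exact absurd (sub_eq_zero.mp h') hab
      · exact h'
    have h1 := key x y hxy hx hy
    have h2 := key x z hxz hx hz
    have : u * (y - z) = 0 := by linear_combination h1 - h2
    rcases mul_eq_zero.mp this with h' | h'
    · exact absurd h' hu
    · exact hyz (sub_eq_zero.mp h')

end Aux2

private lemma count_card {γ : Type*} [DecidableEq γ] (s : Finset γ) (g : γ → ℤ) (P N : Finset γ)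
    (hP : ∀ x, x ∈ P ↔ x ∈ s ∧ g x = 1) (hN : ∀ x, x ∈ N ↔ x ∈ s ∧ g x = -1)
    (h : ∀ x ∈ s, g x = 1 ∨ g x = -1) :
    (2 * #N : ℤ) = #s - ∑ x ∈ s, g x ∧ (2 * #P : ℤ) = #s + ∑ x ∈ s, g x := by
  have hPe : P = s.filter (fun x => g x = 1) := by
    ext x; rw [hP, Finset.mem_filter]
  have hNe : N = s.filter (fun x => g x = -1) := by
    ext x; rw [hN, Finset.mem_filter]
  rw [hPe, hNe]
  exact count_neg_one s g h

open Finset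

section Aux
variable {E : Type*} [Field E] [Fintype E] [DecidableEq E]

private lemma sum_shift (u : E) (f : E → ℤ) : ∑ s : E, f (u + s) = ∑ s : E, f s := by
  refine Finset.sum_nbij' (fun s => u + s) (fun t => t - u) (fun _ _ => mem_univ _)
    (fun _ _ => mem_univ _) ?_ ?_ ?_ <;> intro a _ <;> ring_nf

private lemma sum_affine (u w : E) (hu : u ≠ 0) (f : E → ℤ) :
    ∑ t : E, f (u * t + w) = ∑ s : E, f s := by
  refine Finset.sum_nbij' (fun t => u * t + w) (fun s => (s - w) / u) (fun _ _ => mem_univ _)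
    (fun _ _ => mem_univ _) ?_ ?_ ?_
  · intro a _; field_simp; ring
  · intro a _; field_simp; ring
  · intro a _; rfl

private lemma sum_qc_sq_add (hE : ringChar E ≠ 2) (u w : E) (hu : u ≠ 0) (hw : w ≠ 0) :
    ∑ c : E, quadraticChar E (u * c ^ 2 + w) = - quadraticChar E u := by
  have hgrp : ∑ c : E, quadraticChar E (u * c ^ 2 + w)
      = ∑ t : E, ((#(univ.filter fun c : E => c ^ 2 = t) : ℤ)) * quadraticChar E (u * t + w) := by
    rw [← Finset.sum_fiberwise_of_maps_to (g := fun c : E => c ^ 2) (fun c _ => mem_univ _)]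
    refine Finset.sum_congr rfl fun t _ => ?_
    rw [Finset.sum_congr rfl (fun c hc => by rw [(mem_filter.mp hc).2] :
        ∀ c ∈ univ.filter fun c : E => c ^ 2 = t, quadraticChar E (u * c ^ 2 + w)
          = quadraticChar E (u * t + w)), Finset.sum_const, nsmul_eq_mul]
  have hcount : ∀ t : E, ((#(univ.filter fun c : E => c ^ 2 = t) : ℤ)) =
      quadraticChar E t + 1 := by
    intro t
    rw [← quadraticChar_card_sqrts hE t]
    congr 1
    rw [Set.toFinset_setOf]
  rw [hgrp]
  simp_rw [hcount, add_mul, one_mul]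
  rw [Finset.sum_add_distrib]
  have h2 : ∑ t : E, quadraticChar E (u * t + w) = 0 := by
    rw [sum_affine u w hu (fun s => quadraticChar E s)]
    exact quadraticChar_sum_zero hE
  have h1 : ∑ t : E, quadraticChar E t * quadraticChar E (u * t + w) = - quadraticChar E u := by
    have hpt : ∀ t : E, quadraticChar E t * quadraticChar E (u * t + w)
        = quadraticChar E (t * (u * t + w)) := fun t => (map_mul _ _ _).symm
    simp_rw [hpt]
    rw [← Finset.add_sum_erase univ _ (mem_univ (0:E))]
    have hz : (0 : E) * (u * 0 + w) = 0 := by ring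
    rw [hz, quadraticChar_zero, zero_add]
    have hpt2 : ∀ t ∈ univ.erase (0:E), quadraticChar E (t * (u * t + w))
        = quadraticChar E (u + w * t⁻¹) := by
      intro t ht
      have ht0 : t ≠ 0 := (Finset.mem_erase.mp ht).1
      have : t * (u * t + w) = t ^ 2 * (u + w * t⁻¹) := by field_simp
      rw [this, map_mul, quadraticChar_sq_one' ht0, one_mul]
    rw [Finset.sum_congr rfl hpt2]
    have hbij : ∑ t ∈ univ.erase (0:E), quadraticChar E (u + w * t⁻¹)
        = ∑ s ∈ univ.erase (0:E), quadraticChar E (u + s) := by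
      refine Finset.sum_nbij' (fun t => w * t⁻¹) (fun s => w * s⁻¹) ?_ ?_ ?_ ?_ ?_
      · intro t ht
        simp only [Finset.mem_erase, Finset.mem_univ, and_true] at ht ⊢
        exact mul_ne_zero hw (inv_ne_zero ht)
      · intro s hs
        simp only [Finset.mem_erase, Finset.mem_univ, and_true] at hs ⊢
        exact mul_ne_zero hw (inv_ne_zero hs)
      · intro t ht
        simp only [Finset.mem_erase, Finset.mem_univ, and_true] at ht
        field_simp
      · intro s hs
        simp only [Finset.mem_erase, Finset.mem_univ, and_true] at hs
        field_simp
      · intro t ht; rfl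
    rw [hbij]
    have he : ∑ s ∈ univ.erase (0:E), quadraticChar E (u + s)
        = (∑ s : E, quadraticChar E (u + s)) - quadraticChar E (u + 0) := by
      rw [← Finset.add_sum_erase univ (fun s => quadraticChar E (u + s)) (mem_univ (0:E))]; ring
    rw [he, add_zero]
    rw [sum_shift u (fun s => quadraticChar E s), quadraticChar_sum_zero hE]
    ring
  rw [h1, h2, add_zero]

private lemma sum_qc_quadratic (hE : ringChar E ≠ 2) (u v w : E) (hu : u ≠ 0)
    (hdisc : v ^ 2 - 4 * (u * w) ≠ 0) :
    ∑ c : E, quadraticChar E (u * c ^ 2 + v * c + w) = - quadraticChar E u := by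
  have h2 : (2 : E) ≠ 0 := Ring.two_ne_zero hE
  have h4 : (4 : E) ≠ 0 := by
    have : (4 : E) = 2 * 2 := by norm_num
    rw [this]; exact mul_ne_zero h2 h2
  set s := v / (2 * u) with hs
  set w' := w - v ^ 2 / (4 * u) with hw'def
  have hw' : w' ≠ 0 := by
    rw [hw'def]
    intro h
    apply hdisc
    have : v ^ 2 = 4 * u * w := by
      field_simp at h
      linear_combination -h
    rw [this]; ring
  have hpt : ∀ c : E, u * c ^ 2 + v * c + w = u * (c + s) ^ 2 + w' := by
    intro c
    rw [hs, hw'def]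
    field_simp
    ring
  simp_rw [hpt]
  have := sum_shift s (fun c => quadraticChar E (u * c ^ 2 + w'))
  calc ∑ c : E, quadraticChar E (u * (c + s) ^ 2 + w')
      = ∑ c : E, quadraticChar E (u * c ^ 2 + w') := by
        refine Finset.sum_nbij' (fun c => c + s) (fun c => c - s) (fun _ _ => mem_univ _)
          (fun _ _ => mem_univ _) ?_ ?_ ?_ <;> intro a _ <;> ring_nf
    _ = - quadraticChar E u := sum_qc_sq_add hE u w' hu hw'

end Aux
section Aux3
variable {E : Type*} [Field E] [Fintype E] [DecidableEq E]

private lemma card_squares (hE : ringChar E ≠ 2) :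
    (2 * #(univ.filter fun t : E => quadraticChar E t = 1) : ℤ) = Fintype.card E - 1 := by
  have h0 : univ.filter (fun t : E => quadraticChar E t = 1)
      = (univ.erase (0:E)).filter (fun t : E => quadraticChar E t = 1) := by
    ext t
    simp only [mem_filter, mem_univ, true_and, mem_erase, ne_eq, and_true]
    constructor
    · intro h
      refine ⟨fun ht => ?_, h⟩
      rw [ht, quadraticChar_zero] at h
      omega
    · tauto
  have hvals : ∀ t ∈ univ.erase (0:E), quadraticChar E t = 1 ∨ quadraticChar E t = -1 :=
    fun t ht => quadraticChar_dichotomy (Finset.mem_erase.mp ht).1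
  have := (count_neg_one (univ.erase (0:E)) (fun t => quadraticChar E t) hvals).2
  rw [h0, this]
  have hsum : ∑ t ∈ univ.erase (0:E), quadraticChar E t = 0 := by
    have h' := Finset.add_sum_erase univ (fun t => quadraticChar E t) (mem_univ (0:E))
    rw [quadraticChar_sum_zero hE] at h'
    simpa [quadraticChar_zero] using h'
  rw [hsum, Finset.card_erase_of_mem (mem_univ _), Finset.card_univ]
  have : (1:ℕ) ≤ Fintype.card E := Fintype.card_pos
  push_cast [Nat.cast_sub this]
  ring

private lemma key_contradiction (hE : ringChar E ≠ 2) (d a b : E)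
    (hd : ¬ IsSquare d) (ha : a ≠ 0)
    (h1 : ¬ (a = 1 ∧ b = 0)) (h2 : ¬ (a = -1 ∧ b = 0))
    (H : ∀ c : E, quadraticChar E (1 - d * c ^ 2) = quadraticChar E (a ^ 2 - d * (b - c) ^ 2)) :
    False := by
  have h2' : (2 : E) ≠ 0 := Ring.two_ne_zero hE
  have hd0 : d ≠ 0 := fun h => hd (h ▸ ⟨0, by ring⟩)
  have hf : ∀ c : E, 1 - d * c ^ 2 ≠ 0 := by
    intro c hc
    have hc0 : c ≠ 0 := by
      intro h; rw [h] at hc; simp at hc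
    refine hd ⟨c⁻¹, ?_⟩
    rw [← one_div, div_mul_div_comm, eq_div_iff (mul_ne_zero hc0 hc0)]
    linear_combination -hc
  have hg : ∀ c : E, a ^ 2 - d * (b - c) ^ 2 ≠ 0 := by
    intro c hc
    by_cases hbc : b - c = 0
    · rw [hbc] at hc
      simp only [ne_eq, OfNat.ofNat_ne_zero, not_false_eq_true, zero_pow, mul_zero, sub_zero,
        pow_eq_zero_iff] at hc
      exact ha hc
    · refine hd ⟨a / (b - c), ?_⟩
      rw [div_mul_div_comm, eq_div_iff (mul_ne_zero hbc hbc)]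
      linear_combination -hc
  set φ : E → E := fun c => (a ^ 2 - d * (b - c) ^ 2) / (1 - d * c ^ 2) with hφ
  have himg : univ.image φ ⊆ univ.filter (fun t : E => quadraticChar E t = 1) := by
    intro t ht
    obtain ⟨c, _, hc⟩ := Finset.mem_image.mp ht
    simp only [mem_filter, mem_univ, true_and]
    have heq : t * (1 - d * c ^ 2) = a ^ 2 - d * (b - c) ^ 2 := by
      rw [← hc]
      simp only [hφ]
      exact div_mul_cancel₀ _ (hf c)
    have := H c
    have hmul : quadraticChar E t * quadraticChar E (1 - d * c ^ 2)
        = quadraticChar E (1 - d * c ^ 2) := by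
      rw [← map_mul, heq, ← this]
    rcases quadraticChar_dichotomy (hf c) with h' | h' <;> rw [h'] at hmul <;> omega
  have hfib : ∀ t ∈ univ.image φ, #(univ.filter fun c : E => φ c = t) ≤ 2 := by
    intro t _
    have hsub : univ.filter (fun c : E => φ c = t) ⊆
        univ.filter (fun c : E => (d * (t - 1)) * c ^ 2 + (2 * d * b) * c
          + (a ^ 2 - d * b ^ 2 - t) = 0) := by
      intro c hc
      simp only [mem_filter, mem_univ, true_and] at hc ⊢
      have heq : t * (1 - d * c ^ 2) = a ^ 2 - d * (b - c) ^ 2 := by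
        rw [← hc]
        simp only [hφ]
        exact div_mul_cancel₀ _ (hf c)
      linear_combination -heq
    refine le_trans (Finset.card_le_card hsub) (quad_fiber_le_two _ _ _ ?_)
    rintro ⟨hc2, hc1, hc0⟩
    have ht1 : t = 1 := by
      rcases mul_eq_zero.mp hc2 with h' | h'
      · exact absurd h' hd0
      · linear_combination h'
    have hb0 : b = 0 := by
      rcases mul_eq_zero.mp hc1 with h' | h'
      · rcases mul_eq_zero.mp h' with h'' | h''
        · exact absurd h'' h2'
        · exact absurd h'' hd0
      · exact h'
    rw [ht1, hb0] at hc0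
    have : (a - 1) * (a + 1) = 0 := by linear_combination hc0
    rcases mul_eq_zero.mp this with h' | h'
    · exact h1 ⟨by linear_combination h', hb0⟩
    · exact h2 ⟨by linear_combination h', hb0⟩
  have hcardle : Fintype.card E ≤ 2 * #(univ.image φ) := by
    have := Finset.card_le_mul_card_image (univ : Finset E) 2 hfib
    simpa [Finset.card_univ] using this
  have hle2 : #(univ.image φ) ≤ #(univ.filter fun t : E => quadraticChar E t = 1) :=
    Finset.card_le_card himg
  have := card_squares hE
  have : (Fintype.card E : ℤ) ≤ Fintype.card E - 1 := by
    calc (Fintype.card E : ℤ) ≤ 2 * #(univ.image φ) := by exact_mod_cast hcardle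
      _ ≤ 2 * #(univ.filter fun t : E => quadraticChar E t = 1) := by
          exact_mod_cast Nat.mul_le_mul_left 2 hle2
      _ = Fintype.card E - 1 := card_squares hE
  omega

end Aux3

set_option maxHeartbeats 4000000 in
/-- the (αF_q, 1)-construction gives a maximal independent set of size
(q+1)/2 in P(q²) for q ≡ 1 (mod 4) and a maximal clique of size (q+3)/2 for
q ≡ 3 (mod 4). -/
theorem stmt_5 (q : ℕ) (hq : Odd q) (hq' : IsPrimePow q)
    (F : Type*) [Field F] (hF : Nat.card F = q ^ 2)
    (K : Subfield F) (hK : Nat.card K = q)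
    (d : F) (hdK : d ∈ K) (hd0 : d ≠ 0) (hdns : ¬ ∃ c ∈ K, c * c = d)
    (α : F) (hα : α ^ 2 = d) :
    (q % 4 = 1 →
      maxPaleyIndep ({1} ∪ {x : F | ∃ c ∈ K, x = c * α ∧ ¬ IsSquare (c * α - 1)}) ∧
      ({1} ∪ {x : F | ∃ c ∈ K, x = c * α ∧ ¬ IsSquare (c * α - 1)} : Set F).ncard
        = (q + 1) / 2) ∧
    (q % 4 = 3 →
      maxPaleyClique ({1, -1} ∪ {x : F | ∃ c ∈ K, x = c * α ∧ IsSquare (c * α - 1)}) ∧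
      ({1, -1} ∪ {x : F | ∃ c ∈ K, x = c * α ∧ IsSquare (c * α - 1)} : Set F).ncard
        = (q + 3) / 2) := by
  classical
  obtain ⟨p, n, hpp, hn, hqpn⟩ := hq'
  have hp : p.Prime := Nat.prime_iff.mpr hpp
  have hq2 : 2 ≤ q := by
    calc 2 ≤ p := hp.two_le
    _ ≤ p ^ n := Nat.le_self_pow (by omega) p
    _ = q := hqpn
  have hq_odd : q % 2 = 1 := Nat.odd_iff.mp hq
  have hFfin : Finite F := Nat.finite_of_card_ne_zero (by rw [hF]; positivity)
  have instF : Fintype F := Fintype.ofFinite F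
  have hcardF : Fintype.card F = q ^ 2 := by rw [← Nat.card_eq_fintype_card, hF]
  have instK : Fintype ↥K := Fintype.ofFinite _
  have hcardK : Fintype.card ↥K = q := by rw [← Nat.card_eq_fintype_card, hK]
  have hK2 : ringChar ↥K ≠ 2 := by
    intro h
    have := FiniteField.even_card_of_char_two h
    rw [hcardK] at this
    omega
  have hF2 : ringChar F ≠ 2 := by
    intro h
    have h1 := FiniteField.even_card_of_char_two h
    rw [hcardF] at h1
    have h2 : q ^ 2 % 2 = 1 := Nat.odd_iff.mp (hq.pow)
    omega
  have h2F : (2 : F) ≠ 0 := Ring.two_ne_zero hF2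
  -- the characteristic of F is p
  have hcharF : CharP F (ringChar F) := ringChar.charP F
  obtain ⟨m, hrp, hcard⟩ := FiniteField.card F (ringChar F)
  have hrc : ringChar F = p := by
    have h1 : (ringChar F) ^ (m : ℕ) = p ^ (2 * n) := by
      rw [← hcard, hcardF, ← hqpn, ← pow_mul, mul_comm n 2]
    have hd : p ∣ (ringChar F) ^ (m : ℕ) := by
      rw [h1]; exact dvd_pow_self p (by omega)
    exact ((Nat.prime_dvd_prime_iff_eq hp hrp).mp (hp.dvd_of_dvd_pow hd)).symm
  have hfrob : ∀ x y : F, (x + y) ^ q = x ^ q + y ^ q := by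
    haveI : Fact p.Prime := ⟨hp⟩
    haveI : CharP F p := by rw [← hrc]; exact hcharF
    intro x y
    rw [← hqpn]
    exact add_pow_char_pow x y p n
  have hKpow : ∀ k : ↥K, k ^ q = k := by
    intro k; rw [← hcardK]; exact FiniteField.pow_card k
  have hKpowF : ∀ k : ↥K, (k : F) ^ q = k := by
    intro k
    exact_mod_cast congrArg (Subtype.val) (hKpow k)
  set dK : ↥K := ⟨d, hdK⟩ with hdKdef
  have hdKcoe : (dK : F) = d := rfl
  have hdK0 : dK ≠ 0 := fun h => hd0 (by rw [← hdKcoe, h]; rfl)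
  have hdKns : ¬ IsSquare dK := by
    rintro ⟨r, hr⟩
    refine hdns ⟨↑r, r.2, ?_⟩
    rw [← hdKcoe, hr]
    push_cast
    ring
  have hχd : quadraticChar ↥K dK = -1 := quadraticChar_neg_one_iff_not_isSquare.mpr hdKns
  set e : ℕ := (q - 1) / 2 with he
  have hq2e : q = 2 * e + 1 := by omega
  have hceK : Fintype.card ↥K / 2 = e := by rw [hcardK]; omega
  have hdpowK : dK ^ e = -1 := by
    rcases FiniteField.pow_dichotomy hK2 hdK0 with h1 | h1
    · exfalso
      have h2 := quadraticChar_eq_pow_of_char_ne_two hK2 hdK0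
      rw [hceK] at h2
      rw [hceK] at h1
      rw [h1, if_pos rfl] at h2
      rw [h2] at hχd
      omega
    · rw [hceK] at h1; exact h1
  have hdpowF : d ^ e = -1 := by
    have := congrArg (Subtype.val) hdpowK
    push_cast at this
    rw [← hdKcoe]; exact_mod_cast hdpowK
  have hα0 : α ≠ 0 := by
    intro h
    apply hd0
    rw [← hα, h]
    ring
  have hαK : α ∉ K := fun hmem => hdns ⟨α, hmem, by rw [← hα]; ring⟩
  have hαq : α ^ q = -α := by
    rw [hq2e]
    calc α ^ (2 * e + 1) = (α ^ 2) ^ e * α := by rw [pow_succ, pow_mul]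
    _ = -α := by rw [hα, hdpowF]; ring
  -- decomposition x = a + b α
  have hKne : ∀ (b b' : ↥K), b ≠ b' → ((b : F) - b') ≠ 0 := by
    intro b b' h hc
    exact h (Subtype.ext (by rw [sub_eq_zero] at hc; exact_mod_cast hc))
  have hinj : Function.Injective (fun ab : ↥K × ↥K => (ab.1 : F) + ab.2 * α) := by
    rintro ⟨a, b⟩ ⟨a', b'⟩ hab
    simp only at hab
    by_cases hbb : b = b'
    · subst hbb
      have haa : a = a' := by
        have h' := hab
        field_simp at h'
        exact Subtype.ext (add_right_cancel h')
      exact Prod.ext haa rfl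
    · exfalso
      apply hαK
      have hbb0 : (b - b' : ↥K) ≠ 0 := sub_ne_zero.mpr hbb
      have hbbF : ((b : F) - b') ≠ 0 := hKne b b' hbb
      have : α = (((a' - a) * (b - b')⁻¹ : ↥K) : F) := by
        push_cast
        rw [eq_mul_inv_iff_mul_eq₀ hbbF]
        linear_combination hab
      rw [this]
      exact SetLike.coe_mem _
  have hbijc : Function.Bijective (fun ab : ↥K × ↥K => (ab.1 : F) + ab.2 * α) := by
    rw [Fintype.bijective_iff_injective_and_card]
    exact ⟨hinj, by rw [Fintype.card_prod, hcardK, hcardF]; ring⟩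
  have hdecomp : ∀ x : F, ∃ a b : ↥K, x = (a : F) + b * α := by
    intro x
    obtain ⟨⟨a, b⟩, hab⟩ := hbijc.2 x
    exact ⟨a, b, hab.symm⟩
  have hzero : ∀ a b : ↥K, (a : F) + b * α = 0 → a = 0 ∧ b = 0 := by
    intro a b h
    have h0 : (fun ab : ↥K × ↥K => (ab.1 : F) + ab.2 * α) (a, b)
        = (fun ab : ↥K × ↥K => (ab.1 : F) + ab.2 * α) (0, 0) := by
      simpa using h
    have := hinj h0
    exact ⟨congrArg Prod.fst this, congrArg Prod.snd this⟩
  have hconj : ∀ a b : ↥K, ((a : F) + b * α) ^ q = (a : F) - b * α := by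
    intro a b
    rw [hfrob, mul_pow, hKpowF, hKpowF, hαq]
    ring
  have hnorm : ∀ a b : ↥K, ((a : F) + b * α) ^ (q + 1) = ((a * a - dK * b * b : ↥K) : F) := by
    intro a b
    rw [pow_succ, hconj]
    push_cast [hdKcoe]
    linear_combination (-(b : F) * b) * hα
  have hN0 : ∀ a b : ↥K, a * a - dK * b * b = 0 → a = 0 ∧ b = 0 := by
    intro a b h
    by_cases hb : b = 0
    · subst hb
      refine ⟨?_, rfl⟩
      have : a * a = 0 := by linear_combination h
      exact mul_self_eq_zero.mp this
    · exfalso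
      refine hdKns ⟨a * b⁻¹, ?_⟩
      field_simp
      linear_combination -h
  have hx0 : ∀ a b : ↥K, (a : F) + b * α ≠ 0 → a * a - dK * b * b ≠ 0 := by
    intro a b hx h
    obtain ⟨h1, h2⟩ := hN0 a b h
    apply hx
    rw [h1, h2]
    push_cast
    ring
  have hsq : ∀ a b : ↥K, ((a : F) + b * α ≠ 0) →
      (IsSquare ((a : F) + b * α) ↔ quadraticChar ↥K (a * a - dK * b * b) = 1) := by
    intro a b hx
    have hNne := hx0 a b hx
    have hiff := FiniteField.isSquare_iff hF2 hx
    have hcf2 : Fintype.card F / 2 = (q + 1) * e := by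
      rw [hcardF]
      have h1 : q ^ 2 = 2 * ((q + 1) * e) + 1 := by rw [hq2e]; ring
      omega
    rw [hcf2, pow_mul, hnorm] at hiff
    rw [hiff]
    have hKiff := quadraticChar_eq_pow_of_char_ne_two hK2 hNne
    rw [hceK] at hKiff
    constructor
    · intro h
      have hpow : (a * a - dK * b * b) ^ e = 1 := by
        apply Subtype.ext
        exact_mod_cast h
      rw [hKiff, if_pos hpow]
    · intro h
      by_cases hpow : (a * a - dK * b * b) ^ e = 1
      · exact_mod_cast congrArg (Subtype.val) hpow
      · rw [hKiff, if_neg hpow] at h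
        omega
  -- criteria specialized to points on the line
  have hcform : ∀ c : ↥K, (c : F) * α - 1 = ((-1 : ↥K) : F) + c * α := by
    intro c; push_cast; ring
  have hcne : ∀ c : ↥K, (c : F) * α - 1 ≠ 0 := by
    intro c h
    rw [hcform] at h
    have := (hzero _ _ h).1
    simpa using this
  have hcrit : ∀ c : ↥K, IsSquare ((c : F) * α - 1) ↔
      quadraticChar ↥K (1 - dK * (c * c)) = 1 := by
    intro c
    rw [hcform, hsq (-1) c (by rw [← hcform]; exact hcne c),
      show ((-1 : ↥K)) * (-1) - dK * c * c = 1 - dK * (c * c) from by ring]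
  have hfne : ∀ c : ↥K, (1 : ↥K) - dK * (c * c) ≠ 0 := by
    intro c h
    have h' : (-1 : ↥K) * (-1) - dK * c * c = 0 := by linear_combination h
    have := (hN0 (-1) c h').1
    simpa using this
  have hcrit' : ∀ c : ↥K, ¬ IsSquare ((c : F) * α - 1) ↔
      quadraticChar ↥K (1 - dK * (c * c)) = -1 := by
    intro c
    rw [hcrit c]
    rcases quadraticChar_dichotomy (hfne c) with h | h <;> rw [h] <;> norm_num
  have hcform2 : ∀ c : ↥K, (c : F) * α + 1 = ((1 : ↥K) : F) + c * α := by
    intro c; push_cast; ring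
  have hcne2 : ∀ c : ↥K, (c : F) * α + 1 ≠ 0 := by
    intro c h
    rw [hcform2] at h
    have := (hzero _ _ h).1
    simpa using this
  have hcrit2 : ∀ c : ↥K, IsSquare ((c : F) * α + 1) ↔
      quadraticChar ↥K (1 - dK * (c * c)) = 1 := by
    intro c
    rw [hcform2, hsq 1 c (by rw [← hcform2]; exact hcne2 c),
      show ((1 : ↥K)) * 1 - dK * c * c = 1 - dK * (c * c) from by ring]
  -- membership criteria
  have hmem : ∀ x : F, (x ∈ {x : F | ∃ c ∈ K, x = c * α ∧ ¬ IsSquare (c * α - 1)}) ↔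
      ∃ c : ↥K, x = (c : F) * α ∧ quadraticChar ↥K (1 - dK * (c * c)) = -1 := by
    intro x
    constructor
    · rintro ⟨c, hcK, hxc, hns⟩
      exact ⟨⟨c, hcK⟩, hxc, (hcrit' ⟨c, hcK⟩).mp hns⟩
    · rintro ⟨c, hxc, hχ⟩
      exact ⟨↑c, c.2, hxc, (hcrit' c).mpr hχ⟩
  have hmem2 : ∀ x : F, (x ∈ {x : F | ∃ c ∈ K, x = c * α ∧ IsSquare (c * α - 1)}) ↔
      ∃ c : ↥K, x = (c : F) * α ∧ quadraticChar ↥K (1 - dK * (c * c)) = 1 := by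
    intro x
    constructor
    · rintro ⟨c, hcK, hxc, hns⟩
      exact ⟨⟨c, hcK⟩, hxc, (hcrit ⟨c, hcK⟩).mp hns⟩
    · rintro ⟨c, hxc, hχ⟩
      exact ⟨↑c, c.2, hxc, (hcrit c).mpr hχ⟩
  -- -1 and 2 are squares in F
  have hsqm1F : IsSquare (-1 : F) := by
    rw [FiniteField.isSquare_neg_one_iff, hcardF]
    have h4 : q ^ 2 % 4 = (q % 4) ^ 2 % 4 := by rw [Nat.pow_mod]
    have hq4' : q % 4 = 1 ∨ q % 4 = 3 := by omega
    rcases hq4' with h | h <;> rw [h4, h] <;> norm_num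
  have hnegsq : ∀ z : F, IsSquare (-z) ↔ IsSquare z := by
    intro z
    constructor <;> intro h
    · have := hsqm1F.mul h
      rwa [show (-1 : F) * -z = z from by ring] at this
    · have := hsqm1F.mul h
      rwa [show (-1 : F) * z = -z from by ring] at this
  have h2K0 : (2 : ↥K) ≠ 0 := Ring.two_ne_zero hK2
  have hsq2 : IsSquare (2 : F) := by
    have h2Kcoe : ((2 : ↥K) : F) = 2 := by
      rw [show (2 : ↥K) = (1 + 1 : ↥K) from by norm_num]
      push_cast
      norm_num
    have h2K : ((2 : ↥K) : F) + ((0 : ↥K) : F) * α = 2 := by rw [h2Kcoe]; push_cast; ring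
    have hne : ((2 : ↥K) : F) + ((0 : ↥K) : F) * α ≠ 0 := by rw [h2K]; exact h2F
    have := (hsq 2 0 hne).mpr ?_
    · rwa [h2K] at this
    · rw [show (2 : ↥K) * 2 - dK * 0 * 0 = 2 ^ 2 from by ring]
      exact quadraticChar_sq_one' h2K0
  -- character sum for f
  have hsumf : ∑ c : ↥K, quadraticChar ↥K (1 - dK * (c * c)) = - quadraticChar ↥K (-dK) := by
    have hpt : ∀ c : ↥K, (1 : ↥K) - dK * (c * c) = (-dK) * c ^ 2 + 0 * c + 1 := by
      intro c; ring
    rw [Finset.sum_congr rfl fun c _ => congrArg (quadraticChar ↥K) (hpt c)]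
    refine sum_qc_quadratic hK2 _ _ _ (neg_ne_zero.mpr hdK0) ?_
    rw [show (0 : ↥K) ^ 2 - 4 * ((-dK) * 1) = (2 * 2) * dK from by ring]
    exact mul_ne_zero (mul_ne_zero h2K0 h2K0) hdK0
  have hχ4K : quadraticChar ↥K (-1) = ZMod.χ₄ q := by
    rw [quadraticChar_neg_one hK2, hcardK]
  constructor
  · -- q ≡ 1 (mod 4): maximal independent set
    intro hq4
    have hχm1 : quadraticChar ↥K (-1) = 1 := by
      rw [hχ4K]; exact ZMod.χ₄_nat_one_mod_four hq4
    have hχmd : quadraticChar ↥K (-dK) = -1 := by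
      rw [show (-dK : ↥K) = (-1) * dK from by ring, map_mul, hχm1, hχd]
      ring
    set T : Finset ↥K :=
      univ.filter (fun c : ↥K => quadraticChar ↥K (1 - dK * (c * c)) = -1) with hTdef
    have hTcard : #T = (q - 1) / 2 := by
      have hvals : ∀ c ∈ (univ : Finset ↥K), quadraticChar ↥K (1 - dK * (c * c)) = 1 ∨
          quadraticChar ↥K (1 - dK * (c * c)) = -1 :=
        fun c _ => quadraticChar_dichotomy (hfne c)
      have hcnt := (count_card univ (fun c : ↥K => quadraticChar ↥K (1 - dK * (c * c)))
        (univ.filter (fun c : ↥K => quadraticChar ↥K (1 - dK * (c * c)) = 1)) T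
        (fun x => by simp) (fun x => by simp [hTdef]) hvals).1
      rw [hsumf, hχmd, Finset.card_univ, hcardK] at hcnt
      norm_num at hcnt
      omega
    have hBsq : ∀ c : ↥K, quadraticChar ↥K (1 - dK * (c * c)) = -1 →
        ¬ IsSquare ((c : F) * α - 1) := fun c h => (hcrit' c).mpr h
    -- independence
    have hindep : paleyIndep
        ({1} ∪ {x : F | ∃ c ∈ K, x = c * α ∧ ¬ IsSquare (c * α - 1)}) := by
      intro x hx y hy hxy
      simp only [Set.mem_union, Set.mem_singleton_iff] at hx hy
      rcases hx with hx | hx <;> rcases hy with hy | hy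
      · exact absurd (hx.trans hy.symm) hxy
      · subst hx
        obtain ⟨c, rfl, hχ⟩ := (hmem y).mp hy
        intro hsq'
        rw [show (1 : F) - (c : F) * α = -((c : F) * α - 1) from by ring, hnegsq] at hsq'
        exact hBsq c hχ hsq'
      · subst hy
        obtain ⟨c, rfl, hχ⟩ := (hmem x).mp hx
        exact hBsq c hχ
      · obtain ⟨c, rfl, hχ⟩ := (hmem x).mp hx
        obtain ⟨c', rfl, hχ'⟩ := (hmem y).mp hy
        intro hsq'
        have hcc : c ≠ c' := fun h => hxy (by rw [h])
        have hform : (c : F) * α - (c' : F) * α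
            = ((0 : ↥K) : F) + ((c - c' : ↥K) : F) * α := by push_cast; ring
        have hne0 : ((0 : ↥K) : F) + ((c - c' : ↥K) : F) * α ≠ 0 := by
          intro h
          have := (hzero _ _ h).2
          rw [sub_eq_zero] at this
          exact hcc this
        rw [hform, hsq 0 (c - c') hne0,
          show (0 : ↥K) * 0 - dK * (c - c') * (c - c') = (-dK) * (c - c') ^ 2 from by ring,
          map_mul, hχmd, quadraticChar_sq_one' (sub_ne_zero.mpr hcc)] at hsq'
        norm_num at hsq'
    -- maximality
    have hmax : ∀ C' : Set F, paleyIndep C' →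
        ({1} ∪ {x : F | ∃ c ∈ K, x = c * α ∧ ¬ IsSquare (c * α - 1)}) ⊆ C' →
        C' = ({1} ∪ {x : F | ∃ c ∈ K, x = c * α ∧ ¬ IsSquare (c * α - 1)}) := by
      intro C' hC' hsub
      refine Set.Subset.antisymm ?_ hsub
      intro x hx
      by_cases hx1 : x = 1
      · exact Set.mem_union_left _ (by simp [hx1])
      have h1C : (1 : F) ∈ C' := hsub (Set.mem_union_left _ rfl)
      have hxm1 : ¬ IsSquare (x - 1) := hC' x hx 1 h1C hx1
      obtain ⟨a, b, hab⟩ := hdecomp x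
      by_cases ha : a = 0
      · refine Set.mem_union_right _ ((hmem x).mpr ⟨b, ?_, ?_⟩)
        · rw [hab, ha]; push_cast; ring
        · refine (hcrit' b).mp ?_
          rw [show (b : F) * α - 1 = x - 1 from by rw [hab, ha]; push_cast; ring]
          exact hxm1
      · exfalso
        have hxnem1 : x ≠ -1 := by
          intro hm
          apply hxm1
          rw [hm, show (-1 : F) - 1 = -(2 : F) from by ring, hnegsq]
          exact hsq2
        have hcond1 : ¬ (a = 1 ∧ b = 0) := by
          rintro ⟨h1', h2'⟩
          exact hx1 (by rw [hab, h1', h2']; push_cast; ring)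
        have hcond2 : ¬ (a = -1 ∧ b = 0) := by
          rintro ⟨h1', h2'⟩
          exact hxnem1 (by rw [hab, h1', h2']; push_cast; ring)
        have hgne : ∀ c : ↥K, a * a - dK * ((b - c) * (b - c)) ≠ 0 := by
          intro c h
          exact ha (hN0 a (b - c) (by linear_combination h)).1
        have H1 : ∀ c : ↥K, quadraticChar ↥K (1 - dK * (c * c)) = -1 →
            quadraticChar ↥K (a * a - dK * ((b - c) * (b - c))) = -1 := by
          intro c hc
          have hcB : ((c : F) * α) ∈
              ({1} ∪ {x : F | ∃ c ∈ K, x = c * α ∧ ¬ IsSquare (c * α - 1)} : Set F) :=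
            Set.mem_union_right _ ((hmem _).mpr ⟨c, rfl, hc⟩)
          have hxc : x ≠ (c : F) * α := by
            intro h
            apply ha
            have h0 : (a : F) + ((b - c : ↥K) : F) * α = 0 := by
              push_cast
              linear_combination hab.symm.trans h
            exact (hzero _ _ h0).1
          have hns := hC' x hx ((c : F) * α) (hsub hcB) hxc
          have hform : x - (c : F) * α = (a : F) + ((b - c : ↥K) : F) * α := by
            rw [hab]; push_cast; ring
          rw [hform] at hns
          have hne0 : (a : F) + ((b - c : ↥K) : F) * α ≠ 0 := fun h => ha (hzero _ _ h).1
          rcases quadraticChar_dichotomy (hx0 a (b - c) hne0) with h' | h'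
          · exact absurd ((hsq a (b - c) hne0).mpr h') hns
          · rw [show a * a - dK * ((b - c) * (b - c)) = a * a - dK * (b - c) * (b - c)
              from by ring]
            exact h'
        set Tg : Finset ↥K := univ.filter
          (fun c : ↥K => quadraticChar ↥K (a * a - dK * ((b - c) * (b - c))) = -1) with hTgdef
        have hdisc : ((2 : ↥K) * dK * b) ^ 2 - 4 * ((-dK) * (a * a - dK * (b * b))) ≠ 0 := by
          rw [show ((2 : ↥K) * dK * b) ^ 2 - 4 * ((-dK) * (a * a - dK * (b * b)))
            = ((2 : ↥K) * 2) * (dK * (a * a)) from by ring]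
          exact mul_ne_zero (mul_ne_zero h2K0 h2K0) (mul_ne_zero hdK0 (mul_ne_zero ha ha))
        have hsumg : ∑ c : ↥K, quadraticChar ↥K (a * a - dK * ((b - c) * (b - c)))
            = - quadraticChar ↥K (-dK) := by
          have hpt : ∀ c : ↥K, a * a - dK * ((b - c) * (b - c))
              = (-dK) * c ^ 2 + ((2 : ↥K) * dK * b) * c + (a * a - dK * (b * b)) := by
            intro c; ring
          rw [Finset.sum_congr rfl fun c _ => congrArg (quadraticChar ↥K) (hpt c)]
          exact sum_qc_quadratic hK2 _ _ _ (neg_ne_zero.mpr hdK0) hdisc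
        have hTgcard : #Tg = (q - 1) / 2 := by
          have hvals : ∀ c ∈ (univ : Finset ↥K),
              quadraticChar ↥K (a * a - dK * ((b - c) * (b - c))) = 1 ∨
              quadraticChar ↥K (a * a - dK * ((b - c) * (b - c))) = -1 :=
            fun c _ => quadraticChar_dichotomy (hgne c)
          have hcnt := (count_card univ
            (fun c : ↥K => quadraticChar ↥K (a * a - dK * ((b - c) * (b - c))))
            (univ.filter (fun c : ↥K =>
              quadraticChar ↥K (a * a - dK * ((b - c) * (b - c))) = 1)) Tg
            (fun x => by simp) (fun x => by simp [hTgdef]) hvals).1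
          rw [hsumg, hχmd, Finset.card_univ, hcardK] at hcnt
          norm_num at hcnt
          omega
        have hsubT : T ⊆ Tg := by
          intro c hc
          simp only [hTdef, Finset.mem_filter, Finset.mem_univ, true_and] at hc
          simp only [hTgdef, Finset.mem_filter, Finset.mem_univ, true_and]
          exact H1 c hc
        have heqT : T = Tg := Finset.eq_of_subset_of_card_le hsubT (by rw [hTcard, hTgcard])
        have H : ∀ c : ↥K, quadraticChar ↥K (1 - dK * c ^ 2)
            = quadraticChar ↥K (a ^ 2 - dK * (b - c) ^ 2) := by
          intro c
          have hfT : c ∈ T ↔ quadraticChar ↥K (1 - dK * (c * c)) = -1 := by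
            simp [hTdef]
          have hgT : c ∈ Tg ↔
              quadraticChar ↥K (a * a - dK * ((b - c) * (b - c))) = -1 := by
            simp [hTgdef]
          rw [show (1 : ↥K) - dK * c ^ 2 = 1 - dK * (c * c) from by ring,
            show a ^ 2 - dK * (b - c) ^ 2 = a * a - dK * ((b - c) * (b - c)) from by ring]
          rcases quadraticChar_dichotomy (hfne c) with h1 | h1 <;>
            rcases quadraticChar_dichotomy (hgne c) with h2 | h2
          · rw [h1, h2]
          · exfalso
            have hcT : c ∈ T := by rw [heqT]; exact hgT.mpr h2
            rw [hfT] at hcT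
            omega
          · exfalso
            have hcT : c ∈ Tg := by rw [← heqT]; exact hfT.mpr h1
            rw [hgT] at hcT
            omega
          · rw [h1, h2]
        exact key_contradiction hK2 dK a b hdKns ha hcond1 hcond2 H
    -- cardinality
    have hinjα : Function.Injective (fun c : ↥K => (c : F) * α) := by
      intro c c' h
      simp only at h
      have : (c : F) = c' := mul_right_cancel₀ hα0 h
      exact_mod_cast this
    have himgeq : {x : F | ∃ c ∈ K, x = c * α ∧ ¬ IsSquare (c * α - 1)}
        = ↑(T.image (fun c : ↥K => (c : F) * α)) := by
      ext x
      rw [Finset.coe_image, Set.mem_image]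
      constructor
      · intro hx
        obtain ⟨c, hxc, hχ⟩ := (hmem x).mp hx
        refine ⟨c, ?_, hxc.symm⟩
        rw [Finset.mem_coe, hTdef, Finset.mem_filter]
        exact ⟨Finset.mem_univ _, hχ⟩
      · rintro ⟨c, hc, rfl⟩
        refine (hmem _).mpr ⟨c, rfl, ?_⟩
        simp only [Finset.mem_coe, hTdef, Finset.mem_filter, Finset.mem_univ, true_and] at hc
        exact hc
    have h1not : (1 : F) ∉ T.image (fun c : ↥K => (c : F) * α) := by
      intro h
      obtain ⟨c, _, hc⟩ := Finset.mem_image.mp h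
      apply hαK
      have hc0 : (c : F) ≠ 0 := by
        intro h0; rw [h0, zero_mul] at hc; exact zero_ne_one hc
      have hc0' : c ≠ 0 := fun h' => hc0 (by rw [h']; rfl)
      have hαc : α = ((c⁻¹ : ↥K) : F) := by
        push_cast
        exact (eq_inv_of_mul_eq_one_right hc)
      rw [hαc]
      exact SetLike.coe_mem _
    have hcardS : ({1} ∪ {x : F | ∃ c ∈ K, x = c * α ∧ ¬ IsSquare (c * α - 1)} : Set F).ncard
        = (q + 1) / 2 := by
      rw [Set.singleton_union, himgeq, ← Finset.coe_insert, Set.ncard_coe_finset,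
        Finset.card_insert_of_notMem h1not, Finset.card_image_of_injective _ hinjα, hTcard]
      omega
    exact ⟨⟨hindep, hmax⟩, hcardS⟩
  · -- q ≡ 3 (mod 4): maximal clique
    intro hq4
    have hχm1 : quadraticChar ↥K (-1) = -1 := by
      rw [hχ4K]; exact ZMod.χ₄_nat_three_mod_four hq4
    have hχmd : quadraticChar ↥K (-dK) = 1 := by
      rw [show (-dK : ↥K) = (-1) * dK from by ring, map_mul, hχm1, hχd]
      ring
    have h1nem1 : (1 : F) ≠ -1 := by
      intro h
      apply h2F
      linear_combination h
    set T : Finset ↥K :=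
      univ.filter (fun c : ↥K => quadraticChar ↥K (1 - dK * (c * c)) = 1) with hTdef
    have hTcard : #T = (q - 1) / 2 := by
      have hvals : ∀ c ∈ (univ : Finset ↥K), quadraticChar ↥K (1 - dK * (c * c)) = 1 ∨
          quadraticChar ↥K (1 - dK * (c * c)) = -1 :=
        fun c _ => quadraticChar_dichotomy (hfne c)
      have hcnt := (count_card univ (fun c : ↥K => quadraticChar ↥K (1 - dK * (c * c)))
        T (univ.filter (fun c : ↥K => quadraticChar ↥K (1 - dK * (c * c)) = -1))
        (fun x => by simp [hTdef]) (fun x => by simp) hvals).2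
      rw [hsumf, hχmd, Finset.card_univ, hcardK] at hcnt
      norm_num at hcnt
      omega
    have hBsq : ∀ c : ↥K, quadraticChar ↥K (1 - dK * (c * c)) = 1 →
        IsSquare ((c : F) * α - 1) := fun c h => (hcrit c).mpr h
    -- clique
    have hclique : paleyClique
        ({1, -1} ∪ {x : F | ∃ c ∈ K, x = c * α ∧ IsSquare (c * α - 1)}) := by
      intro x hx y hy hxy
      simp only [Set.mem_union, Set.mem_insert_iff, Set.mem_singleton_iff] at hx hy
      rcases hx with (hx | hx) | hx <;> rcases hy with (hy | hy) | hy
      · exact absurd (hx.trans hy.symm) hxy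
      · subst hx; subst hy
        rw [show (1 : F) - -1 = 2 from by ring]
        exact hsq2
      · subst hx
        obtain ⟨c, rfl, hχ⟩ := (hmem2 y).mp hy
        rw [show (1 : F) - (c : F) * α = -((c : F) * α - 1) from by ring, hnegsq]
        exact hBsq c hχ
      · subst hx; subst hy
        rw [show (-1 : F) - 1 = -2 from by ring, show (-2 : F) = -(2 : F) from by ring, hnegsq]
        exact hsq2
      · exact absurd (hx.trans hy.symm) hxy
      · subst hx
        obtain ⟨c, rfl, hχ⟩ := (hmem2 y).mp hy
        rw [show (-1 : F) - (c : F) * α = -((c : F) * α + 1) from by ring, hnegsq]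
        exact (hcrit2 c).mpr hχ
      · subst hy
        obtain ⟨c, rfl, hχ⟩ := (hmem2 x).mp hx
        exact hBsq c hχ
      · subst hy
        obtain ⟨c, rfl, hχ⟩ := (hmem2 x).mp hx
        rw [show (c : F) * α - -1 = (c : F) * α + 1 from by ring]
        exact (hcrit2 c).mpr hχ
      · obtain ⟨c, rfl, hχ⟩ := (hmem2 x).mp hx
        obtain ⟨c', rfl, hχ'⟩ := (hmem2 y).mp hy
        have hcc : c ≠ c' := fun h => hxy (by rw [h])
        have hform : (c : F) * α - (c' : F) * α
            = ((0 : ↥K) : F) + ((c - c' : ↥K) : F) * α := by push_cast; ring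
        have hne0 : ((0 : ↥K) : F) + ((c - c' : ↥K) : F) * α ≠ 0 := by
          intro h
          have := (hzero _ _ h).2
          rw [sub_eq_zero] at this
          exact hcc this
        rw [hform, hsq 0 (c - c') hne0,
          show (0 : ↥K) * 0 - dK * (c - c') * (c - c') = (-dK) * (c - c') ^ 2 from by ring,
          map_mul, hχmd, quadraticChar_sq_one' (sub_ne_zero.mpr hcc)]
        norm_num
    -- maximality
    have hmax : ∀ C' : Set F, paleyClique C' →
        ({1, -1} ∪ {x : F | ∃ c ∈ K, x = c * α ∧ IsSquare (c * α - 1)}) ⊆ C' →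
        C' = ({1, -1} ∪ {x : F | ∃ c ∈ K, x = c * α ∧ IsSquare (c * α - 1)}) := by
      intro C' hC' hsub
      refine Set.Subset.antisymm ?_ hsub
      intro x hx
      by_cases hx1 : x = 1
      · exact Set.mem_union_left _ (by simp [hx1])
      by_cases hxm : x = -1
      · exact Set.mem_union_left _ (by simp [hxm])
      have h1C : (1 : F) ∈ C' := hsub (Set.mem_union_left _ (by simp))
      have hxm1 : IsSquare (x - 1) := hC' x hx 1 h1C hx1
      obtain ⟨a, b, hab⟩ := hdecomp x
      by_cases ha : a = 0
      · refine Set.mem_union_right _ ((hmem2 x).mpr ⟨b, ?_, ?_⟩)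
        · rw [hab, ha]; push_cast; ring
        · refine (hcrit b).mp ?_
          rw [show (b : F) * α - 1 = x - 1 from by rw [hab, ha]; push_cast; ring]
          exact hxm1
      · exfalso
        have hcond1 : ¬ (a = 1 ∧ b = 0) := by
          rintro ⟨h1', h2'⟩
          exact hx1 (by rw [hab, h1', h2']; push_cast; ring)
        have hcond2 : ¬ (a = -1 ∧ b = 0) := by
          rintro ⟨h1', h2'⟩
          exact hxm (by rw [hab, h1', h2']; push_cast; ring)
        have hgne : ∀ c : ↥K, a * a - dK * ((b - c) * (b - c)) ≠ 0 := by
          intro c h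
          exact ha (hN0 a (b - c) (by linear_combination h)).1
        have H1 : ∀ c : ↥K, quadraticChar ↥K (1 - dK * (c * c)) = 1 →
            quadraticChar ↥K (a * a - dK * ((b - c) * (b - c))) = 1 := by
          intro c hc
          have hcB : ((c : F) * α) ∈
              ({1, -1} ∪ {x : F | ∃ c ∈ K, x = c * α ∧ IsSquare (c * α - 1)} : Set F) :=
            Set.mem_union_right _ ((hmem2 _).mpr ⟨c, rfl, hc⟩)
          have hxc : x ≠ (c : F) * α := by
            intro h
            apply ha
            have h0 : (a : F) + ((b - c : ↥K) : F) * α = 0 := by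
              push_cast
              linear_combination hab.symm.trans h
            exact (hzero _ _ h0).1
          have hns := hC' x hx ((c : F) * α) (hsub hcB) hxc
          have hform : x - (c : F) * α = (a : F) + ((b - c : ↥K) : F) * α := by
            rw [hab]; push_cast; ring
          rw [hform] at hns
          have hne0 : (a : F) + ((b - c : ↥K) : F) * α ≠ 0 := fun h => ha (hzero _ _ h).1
          have := (hsq a (b - c) hne0).mp hns
          rw [show a * a - dK * ((b - c) * (b - c)) = a * a - dK * (b - c) * (b - c)
            from by ring]
          exact this
        set Tg : Finset ↥K := univ.filter
          (fun c : ↥K => quadraticChar ↥K (a * a - dK * ((b - c) * (b - c))) = 1) with hTgdef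
        have hdisc : ((2 : ↥K) * dK * b) ^ 2 - 4 * ((-dK) * (a * a - dK * (b * b))) ≠ 0 := by
          rw [show ((2 : ↥K) * dK * b) ^ 2 - 4 * ((-dK) * (a * a - dK * (b * b)))
            = ((2 : ↥K) * 2) * (dK * (a * a)) from by ring]
          exact mul_ne_zero (mul_ne_zero h2K0 h2K0) (mul_ne_zero hdK0 (mul_ne_zero ha ha))
        have hsumg : ∑ c : ↥K, quadraticChar ↥K (a * a - dK * ((b - c) * (b - c)))
            = - quadraticChar ↥K (-dK) := by
          have hpt : ∀ c : ↥K, a * a - dK * ((b - c) * (b - c))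
              = (-dK) * c ^ 2 + ((2 : ↥K) * dK * b) * c + (a * a - dK * (b * b)) := by
            intro c; ring
          rw [Finset.sum_congr rfl fun c _ => congrArg (quadraticChar ↥K) (hpt c)]
          exact sum_qc_quadratic hK2 _ _ _ (neg_ne_zero.mpr hdK0) hdisc
        have hTgcard : #Tg = (q - 1) / 2 := by
          have hvals : ∀ c ∈ (univ : Finset ↥K),
              quadraticChar ↥K (a * a - dK * ((b - c) * (b - c))) = 1 ∨
              quadraticChar ↥K (a * a - dK * ((b - c) * (b - c))) = -1 :=
            fun c _ => quadraticChar_dichotomy (hgne c)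
          have hcnt := (count_card univ
            (fun c : ↥K => quadraticChar ↥K (a * a - dK * ((b - c) * (b - c))))
            Tg (univ.filter (fun c : ↥K =>
              quadraticChar ↥K (a * a - dK * ((b - c) * (b - c))) = -1))
            (fun x => by simp [hTgdef]) (fun x => by simp) hvals).2
          rw [hsumg, hχmd, Finset.card_univ, hcardK] at hcnt
          norm_num at hcnt
          omega
        have hsubT : T ⊆ Tg := by
          intro c hc
          simp only [hTdef, Finset.mem_filter, Finset.mem_univ, true_and] at hc
          simp only [hTgdef, Finset.mem_filter, Finset.mem_univ, true_and]
          exact H1 c hc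
        have heqT : T = Tg := Finset.eq_of_subset_of_card_le hsubT (by rw [hTcard, hTgcard])
        have H : ∀ c : ↥K, quadraticChar ↥K (1 - dK * c ^ 2)
            = quadraticChar ↥K (a ^ 2 - dK * (b - c) ^ 2) := by
          intro c
          have hfT : c ∈ T ↔ quadraticChar ↥K (1 - dK * (c * c)) = 1 := by
            simp [hTdef]
          have hgT : c ∈ Tg ↔
              quadraticChar ↥K (a * a - dK * ((b - c) * (b - c))) = 1 := by
            simp [hTgdef]
          rw [show (1 : ↥K) - dK * c ^ 2 = 1 - dK * (c * c) from by ring,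
            show a ^ 2 - dK * (b - c) ^ 2 = a * a - dK * ((b - c) * (b - c)) from by ring]
          rcases quadraticChar_dichotomy (hfne c) with h1 | h1 <;>
            rcases quadraticChar_dichotomy (hgne c) with h2 | h2
          · rw [h1, h2]
          · exfalso
            have hcT : c ∈ Tg := by rw [← heqT]; exact hfT.mpr h1
            rw [hgT] at hcT
            omega
          · exfalso
            have hcT : c ∈ T := by rw [heqT]; exact hgT.mpr h2
            rw [hfT] at hcT
            omega
          · rw [h1, h2]
        exact key_contradiction hK2 dK a b hdKns ha hcond1 hcond2 H
    -- cardinality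
    have hinjα : Function.Injective (fun c : ↥K => (c : F) * α) := by
      intro c c' h
      simp only at h
      have : (c : F) = c' := mul_right_cancel₀ hα0 h
      exact_mod_cast this
    have himgeq : {x : F | ∃ c ∈ K, x = c * α ∧ IsSquare (c * α - 1)}
        = ↑(T.image (fun c : ↥K => (c : F) * α)) := by
      ext x
      rw [Finset.coe_image, Set.mem_image]
      constructor
      · intro hx
        obtain ⟨c, hxc, hχ⟩ := (hmem2 x).mp hx
        refine ⟨c, ?_, hxc.symm⟩
        rw [Finset.mem_coe, hTdef, Finset.mem_filter]
        exact ⟨Finset.mem_univ _, hχ⟩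
      · rintro ⟨c, hc, rfl⟩
        refine (hmem2 _).mpr ⟨c, rfl, ?_⟩
        simp only [Finset.mem_coe, hTdef, Finset.mem_filter, Finset.mem_univ, true_and] at hc
        exact hc
    have hnotline : ∀ z : F, z ∈ T.image (fun c : ↥K => (c : F) * α) → z ≠ 1 ∧ z ≠ -1 := by
      intro z hz
      obtain ⟨c, _, hc⟩ := Finset.mem_image.mp hz
      constructor <;> intro h1 <;> apply hαK
      · have hc' : (c : F) * α = 1 := by rw [hc, h1]
        have hαc : α = ((c⁻¹ : ↥K) : F) := by
          push_cast
          exact (eq_inv_of_mul_eq_one_right hc')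
        rw [hαc]
        exact SetLike.coe_mem _
      · have hc' : ((-c : ↥K) : F) * α = 1 := by
          push_cast
          rw [neg_mul, hc, h1]
          norm_num
        have hαc : α = (((-c)⁻¹ : ↥K) : F) := by
          push_cast
          exact (eq_inv_of_mul_eq_one_right hc')
        rw [hαc]
        exact SetLike.coe_mem _
    have h1not : (1 : F) ∉ T.image (fun c : ↥K => (c : F) * α) :=
      fun h => (hnotline 1 h).1 rfl
    have hm1not : (-1 : F) ∉ T.image (fun c : ↥K => (c : F) * α) :=
      fun h => (hnotline (-1) h).2 rfl
    have hcardS : (({1, -1} : Set F)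
        ∪ {x : F | ∃ c ∈ K, x = c * α ∧ IsSquare (c * α - 1)}).ncard = (q + 3) / 2 := by
      have hset : ({1, -1} : Set F) ∪ {x : F | ∃ c ∈ K, x = c * α ∧ IsSquare (c * α - 1)}
          = ↑(insert (1 : F) (insert (-1 : F) (T.image (fun c : ↥K => (c : F) * α)))) := by
        rw [himgeq, Set.insert_union, Set.singleton_union]
        simp only [Finset.coe_insert]
      rw [hset, Set.ncard_coe_finset,
        Finset.card_insert_of_notMem (by
          simp only [Finset.mem_insert]
          push_neg
          exact ⟨h1nem1, h1not⟩),
        Finset.card_insert_of_notMem hm1not,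
        Finset.card_image_of_injective _ hinjα, hTcard]
      omega
    exact ⟨⟨hclique, hmax⟩, hcardS⟩
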